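/- Let (X, ≤) be a poset and let f, g : X → ℝ be antichain labelings with values in [0,1] (i.e., 0 ≤ f(x), g(x) ≤ 1 for all x, and for all x < y, f(x) = 0 or f(y) = 1, and likewise for g). Define the Łukasiewicz implication on [0,1] by a ⊸ b = min(1, 1 − a + b). Then for every x ∈ X, □(y ↦ f(y) ⊸ g(y))(x) is given by the following case distinction: it equals 1 if f(y) ≤ g(y) for all y ≥ x; it equals f(x) ⊸ g(x) if g(x) < f(x) < 1 and g(y) = 1 for all y > x; and it equals g(x) in all remaining cases. (This identity shows that the □-based semantics of implication agrees with the temporal-flow semantics of Aguzzoli, Bianchi, and Marra.) -/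

import Mathlib

open Classical

/-- The Łukasiewicz implication on `[0,1]`: `a ⊸ b = min(1, 1 - a + b)`. -/
noncomputable def luk (a b : ℝ) : ℝ := min 1 (1 - a + b)

/-- The operator `□` on `[0,1]`-valued functions on a poset:
`□ f x = f x` if `f y = 1` for all `y > x`, and `□ f x = 0` otherwise. -/
noncomputable def boxR {X : Type*} [PartialOrder X] (f : X → ℝ) : X → ℝ :=
  fun x => if ∀ y, x < y → f y = 1 then f x else 0

lemma luk_eq_one_iff (a b : ℝ) : luk a b = 1 ↔ a ≤ b := by
  unfold luk
  rw [min_eq_left_iff]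
  constructor <;> intro h <;> linarith

/-- The `□`-based semantics of implication agrees with the temporal-flow
semantics of Aguzzoli, Bianchi, and Marra: for antichain labelings `f, g`
with values in `[0,1]`, `□(f ⊸ g)(x)` equals `1` if `f y ≤ g y` for all
`y ≥ x`; equals `f x ⊸ g x` if `g x < f x < 1` and `g y = 1` for all `y > x`;
and equals `g x` otherwise. -/
theorem box_luk_eq_temporal_implication {X : Type*} [PartialOrder X]
    (f g : X → ℝ)
    (hfb : ∀ x : X, 0 ≤ f x ∧ f x ≤ 1) (hgb : ∀ x : X, 0 ≤ g x ∧ g x ≤ 1)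
    (hf : ∀ x y : X, x < y → f x = 0 ∨ f y = 1)
    (hg : ∀ x y : X, x < y → g x = 0 ∨ g y = 1) :
    ∀ x : X, boxR (fun y => luk (f y) (g y)) x =
      if ∀ y : X, x ≤ y → f y ≤ g y then 1
      else if g x < f x ∧ f x < 1 ∧ ∀ y : X, x < y → g y = 1 then luk (f x) (g x)
      else g x := by
  intro x
  unfold boxR
  by_cases hA : ∀ y : X, x ≤ y → f y ≤ g y
  · rw [if_pos hA, if_pos]
    · rw [luk_eq_one_iff]
      exact hA x le_rfl
    · intro y hy
      rw [luk_eq_one_iff]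
      exact hA y hy.le
  · rw [if_neg hA]
    by_cases hbox : ∀ y : X, x < y → luk (f y) (g y) = 1
    · rw [if_pos hbox]
      -- box condition holds: ∀ y > x, f y ≤ g y; failing witness must be x
      have hgt : ∀ y : X, x < y → f y ≤ g y := fun y hy =>
        (luk_eq_one_iff _ _).mp (hbox y hy)
      have hgfx : g x < f x := by
        push_neg at hA
        obtain ⟨y, hxy, hy⟩ := hA
        rcases lt_or_eq_of_le hxy with h | h
        · exact absurd (hgt y h) (not_le.mpr hy)
        · subst h; exact hy
      by_cases hB : g x < f x ∧ f x < 1 ∧ ∀ y : X, x < y → g y = 1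
      · rw [if_pos hB]
      · rw [if_neg hB]
        push_neg at hB
        rcases lt_or_ge (f x) 1 with hf1 | hf1
        · -- then ∃ y > x, g y ≠ 1; derive contradiction
          obtain ⟨y, hxy, hgy⟩ : ∃ y, x < y ∧ g y ≠ 1 := by
            have := hB hgfx hf1
            exact this
          rcases hg x y hxy with h0 | h1
          · -- g x = 0, f x > 0, so f y = 1
            rcases hf x y hxy with hf0 | hf1'
            · rw [h0] at hgfx; linarith
            · exact absurd (le_antisymm (hgb y).2 (hf1' ▸ hgt y hxy)) hgy
          · exact absurd h1 hgy
        · -- f x = 1, luk 1 (g x) = g x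
          have : f x = 1 := le_antisymm (hfb x).2 hf1
          show min 1 (1 - f x + g x) = g x
          rw [this, min_eq_right (by linarith [(hgb x).2])]
          ring
    · rw [if_neg hbox]
      push_neg at hbox
      obtain ⟨y, hxy, hy⟩ := hbox
      have hgy : g y < f y := by
        by_contra h
        exact hy ((luk_eq_one_iff _ _).mpr (not_lt.mp h))
      have hgy1 : g y ≠ 1 := fun h => by
        have := (hfb y).2; rw [h] at hgy; linarith
      have hgx0 : g x = 0 := (hg x y hxy).resolve_right hgy1
      rw [if_neg, hgx0]
      rintro ⟨h1, _, _⟩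
      rw [hgx0] at h1
      have := (hfb x).1
      exact absurd (‹∀ y : X, x < y → g y = 1› y hxy) hgy1
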